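/- Given a fixed integer sequence B = {B_j}, for every d ≥ 0 the collection of truncated minimal generating sets G(J)_{≤d} = ∪_{j≤d} G(J)_j, as J ranges over all squarefree strongly stable monomial ideals of S finitely generated in each degree with B-sequence B, is finite. -/
import Mathlib



/-- Monomials in the variables x_i (i ≥ 1) are modelled as multisets of variable indices;
`m ≤ m'` (multiset inclusion) is divisibility.  `monLexGT m m'` says m >_lex m' in the
lexicographic order on monomials of S (smaller variable indices are lex-larger). -/
def monLexGT (m m' : Multiset ℕ) : Prop :=
  List.Lex (· < ·) (m.sort (· ≤ ·)) (m'.sort (· ≤ ·))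

/-- m >_grlex m' in the graded lexicographic order (lower degree monomials are larger). -/
def gradedLexGT (m m' : Multiset ℕ) : Prop :=
  Multiset.card m < Multiset.card m' ∨
    (Multiset.card m = Multiset.card m' ∧ monLexGT m m')

/-- A set of monomials forms a monomial ideal iff it is upward closed under divisibility. -/
def IsMonIdeal (I : Set (Multiset ℕ)) : Prop :=
  ∀ m ∈ I, ∀ m' : Multiset ℕ, m ≤ m' → m' ∈ I

/-- The minimal generators of a monomial ideal: monomials of I not properly divisible by
a monomial of I. -/
def minGen (I : Set (Multiset ℕ)) : Set (Multiset ℕ) :=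
  {m ∈ I | ∀ m' ∈ I, m' ≤ m → m' = m}

/-- The monomial ideal generated by a set of monomials. -/
def idealGen (G : Set (Multiset ℕ)) : Set (Multiset ℕ) :=
  {m | ∃ g ∈ G, g ≤ m}

/-- A universal squarefree lexsegment ideal (USLI): a squarefree monomial ideal of
S = k[x_i : i ∈ ℕ], finitely generated in each degree, such that together with any
monomial it contains every lex-larger squarefree monomial of the same degree. -/
def IsUSLI (L : Set (Multiset ℕ)) : Prop :=
  IsMonIdeal L ∧
  (∀ m ∈ minGen L, m.Nodup ∧ ∀ x ∈ m, 1 ≤ x) ∧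
  (∀ d : ℕ, {m ∈ minGen L | Multiset.card m = d}.Finite) ∧
  (∀ m ∈ L, ∀ m' : Multiset ℕ, m'.Nodup → (∀ x ∈ m', 1 ≤ x) →
    Multiset.card m' = Multiset.card m → monLexGT m' m → m' ∈ L)

/-- A squarefree strongly stable monomial ideal: all minimal generators are squarefree
(in positive variables), and exchanging a variable of a minimal generator for a smaller
missing one stays in the ideal. -/
def IsSqStable (I : Set (Multiset ℕ)) : Prop :=
  IsMonIdeal I ∧
  (∀ m ∈ minGen I, m.Nodup ∧ ∀ x ∈ m, 1 ≤ x) ∧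
  (∀ m ∈ minGen I, ∀ i j : ℕ, 1 ≤ i → i < j → j ∈ m → i ∉ m →
    (i ::ₘ m.erase j) ∈ I)

/-- The largest variable index dividing a monomial. -/
def maxVar (u : Multiset ℕ) : ℕ := u.toFinset.sup id

/-- The B-sequence of a squarefree strongly stable monomial ideal J, computed via the
squarefree Eliahou–Kervaire formula β_{i,i+j}(J) = Σ_{u ∈ G(J)_j} C(m(u) − j, i):
B_j(J) = Σ_{i=0}^j (−1)^i β_{i,j}(J). -/
noncomputable def sqB (J : Set (Multiset ℕ)) (j : ℕ) : ℤ :=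
  ∑ i ∈ Finset.range (j + 1), (-1 : ℤ) ^ i *
    ∑ᶠ u ∈ {m ∈ minGen J | Multiset.card m = j - i},
      (((maxVar u - (j - i)).choose i : ℕ) : ℤ)

lemma mem_le_maxVar {u : Multiset ℕ} {x : ℕ} (hx : x ∈ u) : x ≤ maxVar u :=
  Finset.le_sup (f := id) (Multiset.mem_toFinset.mpr hx)

lemma maxVar_mem {u : Multiset ℕ} (h : u ≠ 0) : maxVar u ∈ u := by
  obtain ⟨a, ha, hs⟩ := Finset.exists_mem_eq_sup u.toFinset
    (by simpa [Multiset.toFinset_nonempty] using h) id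
  rw [maxVar, hs]; exact Multiset.mem_toFinset.mp ha

lemma exists_min_gen {J : Set (Multiset ℕ)} {m : Multiset ℕ} (hm : m ∈ J) :
    ∃ g ∈ minGen J, g ≤ m := by
  have H : ∀ n : ℕ, ∀ m : Multiset ℕ, Multiset.card m = n → m ∈ J →
      ∃ g ∈ minGen J, g ≤ m := by
    intro n
    induction n using Nat.strong_induction_on with
    | _ n ih =>
      intro m hcard hm
      by_cases h : ∀ m' ∈ J, m' ≤ m → m' = m
      · exact ⟨m, ⟨hm, h⟩, le_refl m⟩
      · push_neg at h
        obtain ⟨m', hm', hle, hne⟩ := h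
        have hlt : Multiset.card m' < n :=
          hcard ▸ Multiset.card_lt_card (lt_of_le_of_ne hle hne)
        obtain ⟨g, hg, hgle⟩ := ih _ hlt m' rfl hm'
        exact ⟨g, hg, hgle.trans hle⟩
  exact H _ m rfl hm

lemma gle_finite {J : Set (Multiset ℕ)}
    (hfin : ∀ j, {m ∈ minGen J | Multiset.card m = j}.Finite) (e : ℕ) :
    {m ∈ minGen J | Multiset.card m ≤ e}.Finite := by
  refine ((Set.finite_Iic e).biUnion fun j _ => hfin j).subset ?_
  rintro m ⟨hm, hc⟩
  exact Set.mem_biUnion (hc : Multiset.card m ∈ Set.Iic e) ⟨hm, rfl⟩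

lemma choose_le_two_pow (n k : ℕ) : n.choose k ≤ 2 ^ n := by
  rcases le_or_gt k n with h | h
  · calc n.choose k ≤ ∑ m ∈ Finset.range (n + 1), n.choose m :=
        Finset.single_le_sum (fun m _ => Nat.zero_le _) (Finset.mem_range.mpr (by omega))
      _ = 2 ^ n := Nat.sum_range_choose n
  · simp [Nat.choose_eq_zero_of_lt h]

lemma maxVar_le {J : Set (Multiset ℕ)} (hJ : IsSqStable J)
    (hfin : ∀ j, {m ∈ minGen J | Multiset.card m = j}.Finite)
    {u : Multiset ℕ} (hu : u ∈ minGen J) :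
    maxVar u ≤ Multiset.card u +
      ({m ∈ minGen J | Multiset.card m ≤ Multiset.card u}).ncard := by
  classical
  rcases eq_or_ne u 0 with rfl | hne
  · simp [maxVar]
  set M := maxVar u with hMdef
  set e := Multiset.card u with hedef
  have hM : M ∈ u := maxVar_mem hne
  have hnd : u.Nodup := (hJ.2.1 u hu).1
  have hpos : ∀ x ∈ u, 1 ≤ x := (hJ.2.1 u hu).2
  have he1 : 1 ≤ e := by
    have := Multiset.card_pos.mpr hne; omega
  set s : Finset ℕ := (Finset.Ico 1 M).filter (fun i => i ∉ u) with hsdef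
  -- cardinality lower bound for s
  have hcards : M - e ≤ s.card := by
    have hsplit := Finset.card_filter_add_card_filter_not
      (s := Finset.Ico 1 M) (p := fun i => i ∉ u)
    rw [← hsdef] at hsplit
    have hsubP : (Finset.Ico 1 M).filter (fun i => ¬ i ∉ u) ⊆ u.toFinset.erase M := by
      intro x hx
      simp only [Finset.mem_filter, Finset.mem_Ico, not_not] at hx
      exact Finset.mem_erase.mpr ⟨by omega, Multiset.mem_toFinset.mpr hx.2⟩
    have hcardtF : u.toFinset.card = e := by
      rw [Finset.card, Multiset.toFinset_val, Multiset.dedup_eq_self.mpr hnd]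
    have h1 : ((Finset.Ico 1 M).filter (fun i => ¬ i ∉ u)).card ≤ e - 1 := by
      have := Finset.card_le_card hsubP
      rwa [Finset.card_erase_of_mem (Multiset.mem_toFinset.mpr hM), hcardtF] at this
    have h2 : (Finset.Ico 1 M).card = M - 1 := by simp
    omega
  -- injection into minimal generators of degree ≤ e
  have hGfin := gle_finite hfin e
  have hvJ : ∀ i ∈ s, (i ::ₘ u.erase M) ∈ J := by
    intro i hi
    simp only [hsdef, Finset.mem_filter, Finset.mem_Ico] at hi
    exact hJ.2.2 u hu i M hi.1.1 hi.1.2 hM hi.2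
  have hpick : ∀ i ∈ s, ∃ g, g ∈ minGen J ∧ g ≤ i ::ₘ u.erase M := by
    intro i hi
    obtain ⟨g, hg, hgle⟩ := exists_min_gen (hvJ i hi)
    exact ⟨g, hg, hgle⟩
  choose g hg1 hg2 using hpick
  have hcardcons : Multiset.card (u.erase M) = e - 1 := by
    rw [Multiset.card_erase_of_mem hM]; rfl
  have hmem_g : ∀ i (hi : i ∈ s), i ∈ g i hi := by
    intro i hi
    by_contra hni
    have hgle : g i hi ≤ u.erase M := (Multiset.le_cons_of_notMem hni).mp (hg2 i hi)
    have : g i hi ≤ u := hgle.trans (Multiset.erase_le M u)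
    have heq : g i hi = u := hu.2 _ (hg1 i hi).1 this
    have := Multiset.card_le_card hgle
    rw [heq, hcardcons] at this
    omega
  set f : ℕ → Multiset ℕ := fun i => if hi : i ∈ s then g i hi else 0 with hfdef
  have hmaps : ∀ i ∈ s, f i ∈ hGfin.toFinset := by
    intro i hi
    have hcg : Multiset.card (g i hi) ≤ e := by
      have := Multiset.card_le_card (hg2 i hi)
      rw [Multiset.card_cons, hcardcons] at this
      omega
    simp only [hfdef, dif_pos hi, Set.Finite.mem_toFinset]
    exact ⟨(hg1 i hi), hcg⟩
  have hinj : Set.InjOn f s := by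
    intro i hi i' hi' hfe
    by_contra hne'
    have hi'' : i' ∈ s := hi'
    have hI : i ∈ s := hi
    rw [hfdef] at hfe
    simp only [dif_pos hI, dif_pos hi''] at hfe
    have hi'g : i' ∈ g i hI := by rw [hfe]; exact hmem_g i' hi''
    have : i' ∈ i ::ₘ u.erase M := Multiset.mem_of_le (hg2 i hI) hi'g
    rcases Multiset.mem_cons.mp this with h | h
    · exact hne' h.symm
    · have : i' ∈ u := Multiset.mem_of_mem_erase h
      simp only [hsdef, Finset.mem_filter] at hi''
      exact hi''.2 this
  have hle : s.card ≤ hGfin.toFinset.card :=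
    Finset.card_le_card_of_injOn f hmaps hinj
  rw [← Set.ncard_eq_toFinset_card _ hGfin] at hle
  omega

lemma key (B : ℕ → ℤ) (d : ℕ) : ∃ T : ℕ, ∀ J : Set (Multiset ℕ), IsSqStable J →
    (∀ j, {m ∈ minGen J | Multiset.card m = j}.Finite) →
    (∀ j, sqB J j = B j) →
    ({m ∈ minGen J | Multiset.card m ≤ d}).ncard ≤ T := by
  induction d with
  | zero =>
    refine ⟨1, fun J hJ hfin hB => ?_⟩
    have hsub : {m ∈ minGen J | Multiset.card m ≤ 0} ⊆ {(0 : Multiset ℕ)} := by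
      rintro m ⟨_, hc⟩
      have : m = 0 := by
        simpa [Multiset.card_eq_zero] using Nat.le_zero.mp hc
      simp [this]
    have := Set.ncard_le_ncard hsub (Set.finite_singleton _)
    simpa using this
  | succ d ih =>
    obtain ⟨T, hT⟩ := ih
    refine ⟨T + ((B (d + 1)).natAbs + (d + 1) * (T * 2 ^ (d + T))), fun J hJ hfin hB => ?_⟩
    set K := d + T with hK
    have hGdfin := gle_finite hfin d
    have hGleT : ({m ∈ minGen J | Multiset.card m ≤ d}).ncard ≤ T := hT J hJ hfin hB
    have hmaxK : ∀ u ∈ minGen J, Multiset.card u ≤ d → maxVar u ≤ K := by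
      intro u hu hc
      have h1 := maxVar_le hJ hfin hu
      have h2 : {m ∈ minGen J | Multiset.card m ≤ Multiset.card u} ⊆
          {m ∈ minGen J | Multiset.card m ≤ d} := fun m hm => ⟨hm.1, hm.2.trans hc⟩
      have h3 := Set.ncard_le_ncard h2 hGdfin
      omega
    have hsq := hB (d + 1)
    rw [sqB, Finset.sum_range_succ'] at hsq
    simp only [pow_zero, one_mul, Nat.sub_zero, Nat.choose_zero_right, Nat.cast_one] at hsq
    have h0 : (∑ᶠ u ∈ {m ∈ minGen J | Multiset.card m = d + 1}, (1 : ℤ)) =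
        (({m ∈ minGen J | Multiset.card m = d + 1}).ncard : ℤ) := by
      have hc : {m ∈ minGen J | Multiset.card m = d + 1} =
          ((hfin (d + 1)).toFinset : Set (Multiset ℕ)) := (Set.Finite.coe_toFinset _).symm
      rw [hc, finsum_mem_coe_finset, Finset.sum_const, nsmul_eq_mul, mul_one,
        Set.ncard_coe_finset]
    rw [h0] at hsq
    set R := ∑ i ∈ Finset.range (d + 1), ((-1 : ℤ) ^ (i + 1) *
      ∑ᶠ u ∈ {m ∈ minGen J | Multiset.card m = d + 1 - (i + 1)},
        (((maxVar u - (d + 1 - (i + 1))).choose (i + 1) : ℕ) : ℤ)) with hR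
    have habs : ∀ i ∈ Finset.range (d + 1),
        |(-1 : ℤ) ^ (i + 1) * ∑ᶠ u ∈ {m ∈ minGen J | Multiset.card m = d + 1 - (i + 1)},
          (((maxVar u - (d + 1 - (i + 1))).choose (i + 1) : ℕ) : ℤ)| ≤ ((T * 2 ^ K : ℕ) : ℤ) := by
      intro i _
      rw [abs_mul, abs_pow, abs_neg, abs_one, one_pow, one_mul]
      set e' := d + 1 - (i + 1) with he'
      have hce : {m ∈ minGen J | Multiset.card m = e'} =
          ((hfin e').toFinset : Set (Multiset ℕ)) := (Set.Finite.coe_toFinset _).symm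
      rw [hce, finsum_mem_coe_finset]
      have hterm : ∀ u ∈ (hfin e').toFinset,
          (((maxVar u - e').choose (i + 1) : ℕ) : ℤ) ≤ ((2 ^ K : ℕ) : ℤ) := by
        intro u hu
        have hu' := (Set.Finite.mem_toFinset _).mp hu
        have hcu := hu'.2
        have hmax : maxVar u ≤ K := hmaxK u hu'.1 (by omega)
        have : (maxVar u - e').choose (i + 1) ≤ 2 ^ K :=
          le_trans (choose_le_two_pow _ _) (Nat.pow_le_pow_right (by norm_num) (by omega))
        exact_mod_cast this
      have hnonneg : (0 : ℤ) ≤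
          ∑ u ∈ (hfin e').toFinset, (((maxVar u - e').choose (i + 1) : ℕ) : ℤ) :=
        Finset.sum_nonneg fun u _ => by positivity
      rw [abs_of_nonneg hnonneg]
      have hcardle : (hfin e').toFinset.card ≤ T := by
        have hsub : {m ∈ minGen J | Multiset.card m = e'} ⊆
            {m ∈ minGen J | Multiset.card m ≤ d} := by
          rintro m ⟨h1, h2⟩
          exact ⟨h1, by omega⟩
        have h4 := Set.ncard_le_ncard hsub hGdfin
        rw [Set.ncard_eq_toFinset_card _ (hfin e')] at h4
        omega
      calc ∑ u ∈ (hfin e').toFinset, (((maxVar u - e').choose (i + 1) : ℕ) : ℤ)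
          ≤ ∑ _u ∈ (hfin e').toFinset, ((2 ^ K : ℕ) : ℤ) := Finset.sum_le_sum hterm
        _ = ((hfin e').toFinset.card : ℤ) * ((2 ^ K : ℕ) : ℤ) := by
            rw [Finset.sum_const, nsmul_eq_mul]
        _ ≤ ((T * 2 ^ K : ℕ) : ℤ) := by
            push_cast
            have h2 : (0:ℤ) ≤ (2:ℤ) ^ K := by positivity
            exact mul_le_mul_of_nonneg_right (by exact_mod_cast hcardle) h2
    have hRabs : |R| ≤ (((d + 1) * (T * 2 ^ K) : ℕ) : ℤ) := by
      calc |R| ≤ ∑ i ∈ Finset.range (d + 1),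
            |(-1 : ℤ) ^ (i + 1) * ∑ᶠ u ∈ {m ∈ minGen J | Multiset.card m = d + 1 - (i + 1)},
              (((maxVar u - (d + 1 - (i + 1))).choose (i + 1) : ℕ) : ℤ)| := by
            rw [hR]; exact Finset.abs_sum_le_sum_abs _ _
        _ ≤ ∑ _i ∈ Finset.range (d + 1), ((T * 2 ^ K : ℕ) : ℤ) := Finset.sum_le_sum habs
        _ = (((d + 1) * (T * 2 ^ K) : ℕ) : ℤ) := by
            rw [Finset.sum_const, Finset.card_range, nsmul_eq_mul]; push_cast; ring
    have hNle : ({m ∈ minGen J | Multiset.card m = d + 1}).ncard ≤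
        (B (d + 1)).natAbs + (d + 1) * (T * 2 ^ K) := by
      have h1 : ((({m ∈ minGen J | Multiset.card m = d + 1}).ncard : ℕ) : ℤ) ≤
          ((B (d + 1)).natAbs : ℤ) + (((d + 1) * (T * 2 ^ K) : ℕ) : ℤ) := by
        have ha := le_abs_self (B (d + 1))
        have hb := neg_abs_le R
        rw [Int.abs_eq_natAbs] at ha
        linarith [hRabs, hsq]
      exact_mod_cast h1
    have hunion : {m ∈ minGen J | Multiset.card m ≤ d + 1} =
        {m ∈ minGen J | Multiset.card m ≤ d} ∪ {m ∈ minGen J | Multiset.card m = d + 1} := by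
      ext m
      simp only [Set.mem_setOf_eq, Set.mem_union]
      constructor
      · rintro ⟨h1, h2⟩
        rcases Nat.lt_or_ge (Multiset.card m) (d + 1) with h | h
        · exact Or.inl ⟨h1, by omega⟩
        · exact Or.inr ⟨h1, by omega⟩
      · rintro (⟨h1, h2⟩ | ⟨h1, h2⟩) <;> exact ⟨h1, by omega⟩
    have hun := Set.ncard_union_le {m ∈ minGen J | Multiset.card m ≤ d}
      {m ∈ minGen J | Multiset.card m = d + 1}
    rw [hunion]
    omega


/-- for a fixed integer sequence B and every d, the collection of truncated
minimal generating sets G(J)_{≤ d}, as J ranges over all squarefree strongly stable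
monomial ideals of S finitely generated in each degree with B-sequence B, is finite. -/
theorem truncated_generators_finite (B : ℕ → ℤ) (d : ℕ) :
    {G : Set (Multiset ℕ) | ∃ J : Set (Multiset ℕ),
      IsSqStable J ∧
      (∀ j : ℕ, {m ∈ minGen J | Multiset.card m = j}.Finite) ∧
      (∀ j : ℕ, sqB J j = B j) ∧
      G = {m ∈ minGen J | Multiset.card m ≤ d}}.Finite := by
  classical
  obtain ⟨T, hT⟩ := key B d
  set K := d + T with hK
  set C : Finset (Multiset ℕ) := (Finset.Icc 1 K).powerset.image Finset.val with hC
  have hfinC : ({G : Set (Multiset ℕ) | G ⊆ ↑C}).Finite :=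
    C.finite_toSet.finite_subsets
  refine hfinC.subset ?_
  rintro G ⟨J, hJ, hfin, hB, rfl⟩
  intro m hm
  obtain ⟨hmg, hmc⟩ := hm
  have hnd : m.Nodup := (hJ.2.1 m hmg).1
  have hpos : ∀ x ∈ m, 1 ≤ x := (hJ.2.1 m hmg).2
  have hmax : maxVar m ≤ K := by
    have h1 := maxVar_le hJ hfin hmg
    have h2 : {m' ∈ minGen J | Multiset.card m' ≤ Multiset.card m} ⊆
        {m' ∈ minGen J | Multiset.card m' ≤ d} := fun m' hm' => ⟨hm'.1, hm'.2.trans hmc⟩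
    have h3 := Set.ncard_le_ncard h2 (gle_finite hfin d)
    have h4 := hT J hJ hfin hB
    omega
  refine Finset.mem_coe.mpr (Finset.mem_image.mpr ⟨m.toFinset, ?_, ?_⟩)
  · refine Finset.mem_powerset.mpr fun x hx => ?_
    have hxm : x ∈ m := Multiset.mem_toFinset.mp hx
    exact Finset.mem_Icc.mpr ⟨hpos x hxm, (mem_le_maxVar hxm).trans hmax⟩
  · rw [Multiset.toFinset_val]
    exact Multiset.dedup_eq_self.mpr hnd
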